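/- arXiv:2312.16657 — 2 statements merged into one kernel-verified Lean document; each statement's English description precedes it below -/
import Mathlib

section
/- For every natural number n ≥ 1 and every real φ with nφ not an integer multiple of π, one has ∑_{l=0}^{n-1} csc²(φ + πl/n) = n²·csc²(nφ). -/
open Real Finset
open Complex Finset

lemma sin_mul_aux (z : ℂ) :
    Complex.sin z * (2 * I * Complex.exp (z * I)) = Complex.exp (2 * z * I) - 1 := by
  have h0 : Complex.exp (-z*I) * Complex.exp (z*I) = 1 := by
    rw [← Complex.exp_add]; simp
  have h2 : Complex.exp (z*I) * Complex.exp (z*I) = Complex.exp (2*z*I) := by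
    rw [← Complex.exp_add]; ring_nf
  calc Complex.sin z * (2 * I * Complex.exp (z * I))
      = -(Complex.exp (-z*I) * Complex.exp (z*I)) + Complex.exp (z*I) * Complex.exp (z*I) := by
        rw [Complex.sin]; ring_nf; rw [Complex.I_sq]; ring
    _ = Complex.exp (2*z*I) - 1 := by rw [h0, h2]; ring

lemma inv_sin_sq (z : ℂ) :
    (Complex.sin z)⁻¹ ^ 2 =
      -4 * Complex.exp (2*z*I) / (Complex.exp (2*z*I) - 1) ^ 2 := by
  have h1 := sin_mul_aux z
  have hne : (2 : ℂ) * I * Complex.exp (z * I) ≠ 0 := by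
    simp [Complex.exp_ne_zero, Complex.I_ne_zero]
  by_cases hs : Complex.sin z = 0
  · rw [hs] at h1
    simp at h1
    rw [hs, ← h1]
    simp
  · have hd : Complex.exp (2*z*I) - 1 ≠ 0 := by
      rw [← h1]; exact mul_ne_zero hs hne
    have hsq : (Complex.sin z)^2 * (-4 * Complex.exp (2*z*I)) = (Complex.exp (2*z*I) - 1)^2 := by
      rw [← h1]; ring_nf; rw [Complex.I_sq, ← Complex.exp_nat_mul]
      push_cast; ring_nf
    field_simp
    linear_combination -hsq



-- sum of ζ^{lm} where ζ = exp(2πI/n)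
lemma zeta_pow_sum (n : ℕ) (hn : 1 ≤ n) (m : ℕ) :
    ∑ l ∈ Finset.range n, (Complex.exp (2 * Real.pi * I / n)) ^ (m * l) =
      if n ∣ m then (n : ℂ) else 0 := by
  set ζ : ℂ := Complex.exp (2 * Real.pi * I / n) with hζ
  have hprim : IsPrimitiveRoot ζ n := Complex.isPrimitiveRoot_exp n (by omega)
  have hone : ζ ^ m = 1 ↔ n ∣ m := hprim.pow_eq_one_iff_dvd m
  by_cases hdvd : n ∣ m
  · simp only [hdvd, if_true]
    have : ∀ l, ζ ^ (m * l) = 1 := by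
      intro l; rw [pow_mul, hone.2 hdvd, one_pow]
    simp [this]
  · simp only [hdvd, if_false]
    have hne : ζ ^ m ≠ 1 := fun hc => hdvd (hone.1 hc)
    have := geom_sum_mul (ζ ^ m) n
    have hzn : (ζ ^ m) ^ n = 1 := by
      rw [← pow_mul, mul_comm, pow_mul, hprim.pow_eq_one, one_pow]
    rw [hzn, sub_self] at this
    have := mul_eq_zero.mp this
    rcases this with h' | h'
    · calc ∑ l ∈ Finset.range n, ζ ^ (m * l)
          = ∑ l ∈ Finset.range n, (ζ ^ m) ^ l := by
            refine Finset.sum_congr rfl fun l _ => ?_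
            rw [← pow_mul]
      _ = 0 := h'
    · exact absurd (sub_eq_zero.mp h') hne

lemma key_sum (n : ℕ) (hn : 1 ≤ n) (w : ℂ) :
    ∑ l ∈ Finset.range n,
      (w * (Complex.exp (2 * Real.pi * I / n)) ^ l) *
        (∑ j ∈ Finset.range n, (w * (Complex.exp (2 * Real.pi * I / n)) ^ l) ^ j) ^ 2 =
      (n : ℂ) ^ 2 * w ^ n := by
  set ζ : ℂ := Complex.exp (2 * Real.pi * I / n) with hζ
  have step1 : ∀ l, (w * ζ ^ l) * (∑ j ∈ Finset.range n, (w * ζ ^ l) ^ j) ^ 2 =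
      ∑ j ∈ Finset.range n, ∑ k ∈ Finset.range n, w ^ (j + k + 1) * ζ ^ ((j + k + 1) * l) := by
    intro l
    rw [sq, Finset.sum_mul_sum, Finset.mul_sum]
    refine Finset.sum_congr rfl fun j _ => ?_
    rw [Finset.mul_sum]
    refine Finset.sum_congr rfl fun k _ => ?_
    have h1 : (w * ζ ^ l) * ((w * ζ ^ l) ^ j * (w * ζ ^ l) ^ k) = (w * ζ ^ l) ^ (j + k + 1) := by
      ring
    rw [h1, mul_pow, ← pow_mul, mul_comm l (j + k + 1)]
  rw [Finset.sum_congr rfl fun l _ => step1 l]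
  rw [Finset.sum_comm]
  have step2 : ∀ j ∈ Finset.range n,
      ∑ l ∈ Finset.range n, ∑ k ∈ Finset.range n, w ^ (j + k + 1) * ζ ^ ((j + k + 1) * l)
        = (n : ℂ) * w ^ n := by
    intro j hj
    rw [Finset.sum_comm]
    have hj' : j < n := Finset.mem_range.mp hj
    have inner : ∀ k ∈ Finset.range n,
        ∑ l ∈ Finset.range n, w ^ (j + k + 1) * ζ ^ ((j + k + 1) * l)
          = w ^ (j + k + 1) * (if n ∣ (j + k + 1) then (n : ℂ) else 0) := by
      intro k _
      rw [← Finset.mul_sum, zeta_pow_sum n hn]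
    rw [Finset.sum_congr rfl inner]
    rw [Finset.sum_eq_single (n - 1 - j)]
    · have : j + (n - 1 - j) + 1 = n := by omega
      rw [this]
      simp [mul_comm]
    · intro k hk hne
      have hk' : k < n := Finset.mem_range.mp hk
      have : ¬ n ∣ (j + k + 1) := by
        intro hd
        rcases hd with ⟨c, hc⟩
        have hc1 : c = 1 := by nlinarith
        subst hc1
        omega
      simp [this]
    · intro hnm
      exfalso; apply hnm; exact Finset.mem_range.mpr (by omega)
  rw [Finset.sum_congr rfl step2]
  rw [Finset.sum_const, Finset.card_range]
  push_cast
  ring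


lemma div_sum (n : ℕ) (hn : 1 ≤ n) (w : ℂ) (hw : w ^ n ≠ 1) :
    ∑ l ∈ Finset.range n,
      (w * (Complex.exp (2 * Real.pi * I / n)) ^ l) /
        ((w * (Complex.exp (2 * Real.pi * I / n)) ^ l) - 1) ^ 2 =
      (n : ℂ) ^ 2 * w ^ n / (w ^ n - 1) ^ 2 := by
  set ζ : ℂ := Complex.exp (2 * Real.pi * I / n) with hζ
  have hprim : IsPrimitiveRoot ζ n := Complex.isPrimitiveRoot_exp n (by omega)
  have hd : w ^ n - 1 ≠ 0 := sub_ne_zero.mpr hw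
  have hterm : ∀ l ∈ Finset.range n,
      (w * ζ ^ l) / ((w * ζ ^ l) - 1) ^ 2 =
        (w * ζ ^ l) * (∑ j ∈ Finset.range n, (w * ζ ^ l) ^ j) ^ 2 / (w ^ n - 1) ^ 2 := by
    intro l _
    set u := w * ζ ^ l with hu
    have hun : u ^ n = w ^ n := by
      rw [hu, mul_pow, ← pow_mul, mul_comm l n, pow_mul, hprim.pow_eq_one, one_pow, mul_one]
    have hg : (∑ j ∈ Finset.range n, u ^ j) * (u - 1) = w ^ n - 1 := by
      rw [geom_sum_mul, hun]
    have hu1 : u - 1 ≠ 0 := by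
      intro hc
      rw [hc, mul_zero] at hg
      exact hd hg.symm
    rw [div_eq_div_iff (pow_ne_zero _ hu1) (pow_ne_zero _ hd)]
    calc u * (w ^ n - 1) ^ 2 = u * ((∑ j ∈ Finset.range n, u ^ j) * (u - 1)) ^ 2 := by rw [hg]
      _ = u * (∑ j ∈ Finset.range n, u ^ j) ^ 2 * (u - 1) ^ 2 := by ring
  rw [Finset.sum_congr rfl hterm, ← Finset.sum_div, key_sum n hn w]

theorem csc_sq_sum (n : ℕ) (hn : 1 ≤ n) (φ : ℝ)
    (h : ∀ k : ℤ, (n : ℝ) * φ ≠ k * π) :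
    ∑ l ∈ Finset.range n, (Real.sin (φ + π * l / n))⁻¹ ^ 2 =
      (n : ℝ) ^ 2 * (Real.sin (n * φ))⁻¹ ^ 2 := by
  have key : ∑ l ∈ Finset.range n, ((Real.sin (φ + Real.pi * l / n) : ℂ))⁻¹ ^ 2 =
      (n : ℂ) ^ 2 * ((Real.sin (n * φ) : ℂ))⁻¹ ^ 2 := by
    set ζ : ℂ := Complex.exp (2 * Real.pi * I / n) with hζ
    set w : ℂ := Complex.exp (2 * φ * I) with hw
    have hn0 : (n : ℂ) ≠ 0 := Nat.cast_ne_zero.mpr (by omega)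
    have e_l : ∀ l : ℕ, Complex.exp (2 * ((φ : ℂ) + Real.pi * l / n) * I) = w * ζ ^ l := by
      intro l
      rw [hw, hζ, ← Complex.exp_nat_mul, ← Complex.exp_add]
      congr 1
      field_simp
    have e_n : Complex.exp (2 * ((n : ℂ) * φ) * I) = w ^ n := by
      rw [hw, ← Complex.exp_nat_mul]
      congr 1
      ring
    have hwn : w ^ n ≠ 1 := by
      intro hc
      rw [← e_n, Complex.exp_eq_one_iff] at hc
      obtain ⟨k, hk⟩ := hc
      have h2I : (2 : ℂ) * I ≠ 0 := by simp [Complex.I_ne_zero]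
      have : ((n : ℂ) * φ) * (2 * I) = ((k : ℂ) * Real.pi) * (2 * I) := by
        linear_combination hk
      have h3 : ((n : ℂ) * φ) = ((k : ℂ) * Real.pi) := mul_right_cancel₀ h2I this
      apply h k
      exact_mod_cast h3
    calc ∑ l ∈ Finset.range n, ((Real.sin (φ + Real.pi * l / n) : ℂ))⁻¹ ^ 2
        = ∑ l ∈ Finset.range n, -4 * (w * ζ ^ l) / ((w * ζ ^ l) - 1) ^ 2 := by
          refine Finset.sum_congr rfl fun l _ => ?_
          rw [Complex.ofReal_sin, inv_sin_sq]
          push_cast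
          rw [e_l l]
      _ = -4 * ((n : ℂ) ^ 2 * w ^ n / (w ^ n - 1) ^ 2) := by
          rw [← div_sum n hn w hwn, Finset.mul_sum]
          refine Finset.sum_congr rfl fun l _ => ?_
          ring
      _ = (n : ℂ) ^ 2 * ((Real.sin (n * φ) : ℂ))⁻¹ ^ 2 := by
          rw [Complex.ofReal_sin, inv_sin_sq]
          push_cast
          rw [e_n]
          ring
  exact_mod_cast key
end

section
/- For every natural number n ≥ 2, ∑_{l=1}^{n-1} csc(πl/n) = (1/π)·∑_{l=1}^{n-1} (Ψ(1/2 + l/(2n)) − Ψ(l/(2n))). -/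
open Real Finset

/-- The digamma function: the logarithmic derivative of the Gamma function. -/
noncomputable def digamma (x : ℝ) : ℝ := deriv (fun y => Real.log (Real.Gamma y)) x

lemma hasDerivAt_logGamma {x : ℝ} (hx : 0 < x) :
    HasDerivAt (fun y => Real.log (Real.Gamma y)) (digamma x) x := by
  have hd : DifferentiableAt ℝ (fun y => Real.log (Real.Gamma y)) x := by
    refine (Real.differentiableAt_Gamma ?_).log (Real.Gamma_pos_of_pos hx).ne'
    intro m
    have : (0:ℝ) ≤ m := m.cast_nonneg
    intro h; rw [h] at hx; linarith
  simpa [digamma] using hd.hasDerivAt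

lemma digamma_reflect {x : ℝ} (h0 : 0 < x) (h1 : x < 1) :
    digamma (1 - x) - digamma x = π * Real.cos (π * x) / Real.sin (π * x) := by
  have hd1 : HasDerivAt (fun y => Real.log (Real.Gamma y)) (digamma x) x :=
    hasDerivAt_logGamma h0
  have hd2 : HasDerivAt (fun y => Real.log (Real.Gamma (1 - y)))
      (-(digamma (1 - x))) x := by
    have h := (hasDerivAt_logGamma (by linarith : (0:ℝ) < 1 - x)).comp x
      ((hasDerivAt_id x).const_sub 1)
    simp at h; exact h
  have hsum : HasDerivAt (fun y => Real.log (Real.Gamma y) + Real.log (Real.Gamma (1 - y)))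
      (digamma x - digamma (1 - x)) x := by
    rw [sub_eq_add_neg]
    exact hd1.add hd2
  have hsin : HasDerivAt (fun y => Real.sin (π * y)) (Real.cos (π * x) * π) x := by
    have h1 : HasDerivAt (fun y : ℝ => π * y) π x := by
      simpa using (hasDerivAt_id x).const_mul π
    exact (Real.hasDerivAt_sin (π * x)).comp x h1
  have hsinpos : 0 < Real.sin (π * x) :=
    Real.sin_pos_of_pos_of_lt_pi (by positivity) (by nlinarith [Real.pi_pos])
  have hR : HasDerivAt (fun y => Real.log π - Real.log (Real.sin (π * y)))
      (-(Real.cos (π * x) * π / Real.sin (π * x))) x :=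
    (hsin.log hsinpos.ne').const_sub (Real.log π)
  have heq : (fun y => Real.log π - Real.log (Real.sin (π * y)))
      =ᶠ[nhds x] (fun y => Real.log (Real.Gamma y) + Real.log (Real.Gamma (1 - y))) := by
    have hmem : ∀ᶠ y in nhds x, y ∈ Set.Ioo (0:ℝ) 1 :=
      isOpen_Ioo.mem_nhds ⟨h0, h1⟩
    filter_upwards [hmem] with y hy
    have h0y : 0 < y := hy.1
    have h1y : y < 1 := hy.2
    have hsy : 0 < Real.sin (π * y) :=
      Real.sin_pos_of_pos_of_lt_pi (by positivity) (by nlinarith [Real.pi_pos])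
    have hgy : 0 < Real.Gamma y := Real.Gamma_pos_of_pos h0y
    have hgy' : 0 < Real.Gamma (1 - y) := Real.Gamma_pos_of_pos (by linarith)
    have hrefl := Real.Gamma_mul_Gamma_one_sub y
    have hlog : Real.log (Real.Gamma y * Real.Gamma (1 - y)) =
        Real.log (π / Real.sin (π * y)) := by rw [hrefl]
    rw [Real.log_mul hgy.ne' hgy'.ne',
      Real.log_div Real.pi_ne_zero hsy.ne'] at hlog
    linarith
  have hsum' : HasDerivAt (fun y => Real.log (Real.Gamma y) + Real.log (Real.Gamma (1 - y)))
      (-(Real.cos (π * x) * π / Real.sin (π * x))) x := hR.congr_of_eventuallyEq heq.symm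
  have huniq := hsum.unique hsum'
  field_simp at huniq ⊢
  linarith

lemma key {x : ℝ} (h0 : 0 < x) (h1 : x < 1/2) :
    (digamma (1/2 + x) - digamma x) +
      (digamma (1/2 + (1/2 - x)) - digamma (1/2 - x)) = 2 * π / Real.sin (2 * π * x) := by
  have e1 : (1:ℝ)/2 + (1/2 - x) = 1 - x := by ring
  have e2 : (1:ℝ)/2 + x = 1 - (1/2 - x) := by ring
  rw [e1, e2]
  have r1 := digamma_reflect h0 (by linarith)
  have r2 := digamma_reflect (x := 1/2 - x) (by linarith) (by linarith)
  have hc : Real.cos (π * (1/2 - x)) = Real.sin (π * x) := by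
    rw [show π * (1/2 - x) = π/2 - π * x by ring, Real.cos_pi_div_two_sub]
  have hs : Real.sin (π * (1/2 - x)) = Real.cos (π * x) := by
    rw [show π * (1/2 - x) = π/2 - π * x by ring, Real.sin_pi_div_two_sub]
  rw [hc, hs] at r2
  have hsp : 0 < Real.sin (π * x) :=
    Real.sin_pos_of_pos_of_lt_pi (by positivity) (by nlinarith [Real.pi_pos])
  have hcp : 0 < Real.cos (π * x) := by
    apply Real.cos_pos_of_mem_Ioo
    constructor <;> nlinarith [Real.pi_pos]
  have hdouble : Real.sin (2 * π * x) = 2 * Real.sin (π * x) * Real.cos (π * x) := by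
    rw [show 2 * π * x = 2 * (π * x) by ring, Real.sin_two_mul]
  rw [hdouble]
  have hrhs : π * Real.cos (π * x) / Real.sin (π * x) + π * Real.sin (π * x) / Real.cos (π * x)
      = 2 * π / (2 * Real.sin (π * x) * Real.cos (π * x)) := by
    field_simp
    linear_combination Real.sin_sq_add_cos_sq (π * x)
  linarith [r1, r2, hrhs]

theorem csc_sum_digamma_diff (n : ℕ) (hn : 2 ≤ n) :
    ∑ l ∈ Finset.Ico 1 n, (Real.sin (π * l / n))⁻¹ =
      (1 / π) * ∑ l ∈ Finset.Ico 1 n,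
        (digamma (1 / 2 + l / (2 * n)) - digamma (l / (2 * n))) := by
  have hn0 : (0:ℝ) < n := by positivity
  -- reindexing l ↦ n - l
  have hre : ∑ l ∈ Finset.Ico 1 n, (digamma (1/2 + (l:ℝ) / (2 * n)) - digamma ((l:ℝ) / (2 * n))) =
      ∑ l ∈ Finset.Ico 1 n,
        (digamma (1/2 + (1/2 - (l:ℝ) / (2 * n))) - digamma (1/2 - (l:ℝ) / (2 * n))) := by
    refine Finset.sum_nbij' (fun l => n - l) (fun l => n - l) ?_ ?_ ?_ ?_ ?_
    · intro l hl; simp only [Finset.mem_Ico] at hl ⊢; omega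
    · intro l hl; simp only [Finset.mem_Ico] at hl ⊢; omega
    · intro l hl; simp only [Finset.mem_Ico] at hl; show n - (n - l) = l; omega
    · intro l hl; simp only [Finset.mem_Ico] at hl; show n - (n - l) = l; omega
    · intro l hl
      simp only [Finset.mem_Ico] at hl
      have hln : l ≤ n := le_of_lt hl.2
      have hcast : ((n - l : ℕ) : ℝ) = (n : ℝ) - l := by
        push_cast [Nat.cast_sub hln]; ring
      have harg : (1:ℝ)/2 - ((n - l : ℕ) : ℝ) / (2 * n) = (l:ℝ) / (2 * n) := by
        rw [hcast]; field_simp; ring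
      rw [harg]
  have hkey : π * ∑ l ∈ Finset.Ico 1 n, (Real.sin (π * l / n))⁻¹ =
      ∑ l ∈ Finset.Ico 1 n, (digamma (1/2 + (l:ℝ) / (2 * n)) - digamma ((l:ℝ) / (2 * n))) := by
    have h2S : 2 * ∑ l ∈ Finset.Ico 1 n,
          (digamma (1/2 + (l:ℝ) / (2 * n)) - digamma ((l:ℝ) / (2 * n))) =
        ∑ l ∈ Finset.Ico 1 n,
          ((digamma (1/2 + (l:ℝ) / (2 * n)) - digamma ((l:ℝ) / (2 * n))) +
            (digamma (1/2 + (1/2 - (l:ℝ) / (2 * n))) - digamma (1/2 - (l:ℝ) / (2 * n)))) := by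
      rw [Finset.sum_add_distrib, ← hre]; ring
    have hterm : ∀ l ∈ Finset.Ico 1 n,
        (digamma (1/2 + (l:ℝ) / (2 * n)) - digamma ((l:ℝ) / (2 * n))) +
          (digamma (1/2 + (1/2 - (l:ℝ) / (2 * n))) - digamma (1/2 - (l:ℝ) / (2 * n))) =
        2 * (π * (Real.sin (π * l / n))⁻¹) := by
      intro l hl
      simp only [Finset.mem_Ico] at hl
      have hl1 : (1:ℝ) ≤ l := by exact_mod_cast hl.1
      have hln : (l:ℝ) < n := by exact_mod_cast hl.2
      have hx0 : (0:ℝ) < (l:ℝ) / (2 * n) := by positivity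
      have hx1 : (l:ℝ) / (2 * n) < 1/2 := by
        rw [div_lt_iff₀ (by positivity)]; linarith
      have hk := key hx0 hx1
      have harg : 2 * π * ((l:ℝ) / (2 * n)) = π * l / n := by
        field_simp
      rw [harg] at hk
      rw [hk]
      have hsp : 0 < Real.sin (π * l / n) := by
        apply Real.sin_pos_of_pos_of_lt_pi
        · positivity
        · rw [div_lt_iff₀ hn0]
          nlinarith [Real.pi_pos]
      field_simp
    have h2 : 2 * (π * ∑ l ∈ Finset.Ico 1 n, (Real.sin (π * l / n))⁻¹) =
        2 * ∑ l ∈ Finset.Ico 1 n,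
          (digamma (1/2 + (l:ℝ) / (2 * n)) - digamma ((l:ℝ) / (2 * n))) := by
      rw [h2S, Finset.mul_sum, Finset.mul_sum]
      exact (Finset.sum_congr rfl hterm).symm
    linarith
  rw [← hkey, one_div, inv_mul_cancel_left₀ Real.pi_ne_zero]
end
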